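/- For every integer n ≥ 1, the following polynomial identity in two variables x and y over ℚ holds: ∑_{r=2}^{n+1} x^{r-1} C(n-1, r-2) · binom(y, r-1) = x · ∑_{r=1}^{n} C(n-1, r-1) · binom(y+n−r, n) · (x−1)^{r-1}. -/

import Mathlib

/-- The generalized binomial coefficient `binom(y, k) = y(y−1)⋯(y−k+1)/k!`. -/
def binomQ (y : ℚ) (k : ℕ) : ℚ := (∏ i ∈ Finset.range k, (y - (i : ℚ))) / (k.factorial : ℚ)

lemma binomQ_succ (y : ℚ) (k : ℕ) :
    binomQ y (k+1) = binomQ y k * (y - k) / (k+1) := by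
  unfold binomQ
  rw [Finset.prod_range_succ, Nat.factorial_succ]
  have h1 : (k.factorial : ℚ) ≠ 0 := Nat.cast_ne_zero.2 k.factorial_ne_zero
  have h2 : ((k:ℚ)+1) ≠ 0 := by positivity
  push_cast
  field_simp
  try ring
  try (left; trivial)

lemma binomQ_pascal (y : ℚ) (k : ℕ) :
    binomQ (y+1) (k+1) = binomQ y (k+1) + binomQ y k := by
  have h1 : binomQ (y+1) (k+1) = binomQ y k * (y+1) / (k+1) := by
    unfold binomQ
    rw [Finset.prod_range_succ', Nat.factorial_succ]
    have he : ∀ i ∈ Finset.range k, (y + 1 - ((i:ℚ)+1)) = y - i := by intro i _; ring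
    rw [Finset.prod_congr rfl fun i hi => by push_cast; rw [he i hi]]
    have hf : (k.factorial : ℚ) ≠ 0 := Nat.cast_ne_zero.2 k.factorial_ne_zero
    have h2 : ((k:ℚ)+1) ≠ 0 := by positivity
    push_cast
    field_simp
    try ring
    try (left; trivial)
  rw [h1, binomQ_succ]
  have h2 : ((k:ℚ)+1) ≠ 0 := by positivity
  field_simp
  ring

lemma binomQ_vandermonde (m : ℕ) : ∀ (t : ℕ) (y : ℚ),
    ∑ i ∈ Finset.range (m+1), (m.choose i : ℚ) * binomQ y (t + i)
      = binomQ (y + m) (t + m) := by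
  induction m with
  | zero => intro t y; simp
  | succ m ih =>
    intro t y
    have key : binomQ (y + (m+1 : ℕ)) (t + (m+1)) = binomQ (y+m) ((t+m)+1) + binomQ (y+m) (t+m) := by
      have h := binomQ_pascal (y + m) (t + m)
      push_cast
      rw [show y + ((m:ℚ)+1) = (y + m) + 1 by ring, show t + (m+1) = (t+m)+1 from rfl]
      exact h
    rw [key, ← ih t y, show t + m + 1 = (t+1) + m from by omega, ← ih (t+1) y]
    rw [Finset.sum_range_succ' _ (m+1)]
    have hsplit : ∀ i ∈ Finset.range (m+1),
        ((m+1).choose (i+1) : ℚ) * binomQ y (t + (i+1))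
          = (m.choose i : ℚ) * binomQ y ((t+1) + i) + (m.choose (i+1) : ℚ) * binomQ y (t + (i+1)) := by
      intro i _
      rw [Nat.choose_succ_succ]
      push_cast
      rw [show t + (i+1) = (t+1)+i from by omega]
      ring
    rw [Finset.sum_congr rfl hsplit, Finset.sum_add_distrib]
    have hlast : ∑ i ∈ Finset.range (m+1), (m.choose (i+1) : ℚ) * binomQ y (t + (i+1))
        + ((m+1).choose 0 : ℚ) * binomQ y (t + 0)
        = ∑ i ∈ Finset.range (m+1), (m.choose i : ℚ) * binomQ y (t + i) := by
      rw [Finset.sum_range_succ _ m,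
        Finset.sum_range_succ' (fun i => (m.choose i : ℚ) * binomQ y (t + i)) m]
      simp [Nat.choose_succ_self]
    linear_combination hlast

lemma inner_sum_eq (n j : ℕ) (hn : 1 ≤ n) (hj : j < n) (y : ℚ) :
    ∑ k ∈ Finset.range n, ((n-1).choose k : ℚ) * (k.choose j : ℚ) * binomQ y (k+1)
      = ((n-1).choose j : ℚ) * binomQ (y + ((n - 1 - j : ℕ) : ℚ)) n := by
  set m := n - 1 - j with hm
  have h1 : ∑ k ∈ Finset.range n, ((n-1).choose k : ℚ) * (k.choose j : ℚ) * binomQ y (k+1)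
      = ∑ k ∈ Finset.Ico j n, ((n-1).choose k : ℚ) * (k.choose j : ℚ) * binomQ y (k+1) := by
    symm
    apply Finset.sum_subset
    · intro k hk
      simp only [Finset.mem_Ico, Finset.mem_range] at *
      omega
    · intro k hk hk'
      simp only [Finset.mem_Ico, Finset.mem_range] at *
      have : k < j := by omega
      rw [Nat.choose_eq_zero_of_lt this]
      simp
  rw [h1, Finset.sum_Ico_eq_sum_range]
  have hnj : n - j = m + 1 := by omega
  rw [hnj]
  have hterm : ∀ i ∈ Finset.range (m+1),
      ((n-1).choose (j+i) : ℚ) * ((j+i).choose j : ℚ) * binomQ y ((j+i)+1)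
        = ((n-1).choose j : ℚ) * ((m.choose i : ℚ) * binomQ y ((j+1)+i)) := by
    intro i hi
    simp only [Finset.mem_range] at hi
    have hkn : j + i ≤ n - 1 := by omega
    have hsk : j ≤ j + i := by omega
    have hc := Nat.choose_mul (n := n - 1) hsk
    rw [Nat.add_sub_cancel_left] at hc
    have hcQ : ((n-1).choose (j+i) : ℚ) * ((j+i).choose j : ℚ)
        = ((n-1).choose j : ℚ) * ((n-1-j).choose i : ℚ) := by exact_mod_cast congrArg Nat.cast hc
    rw [show (j+i)+1 = (j+1)+i from by omega, hm]
    linear_combination binomQ y ((j+1)+i) * hcQ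
  rw [Finset.sum_congr rfl hterm, ← Finset.mul_sum, binomQ_vandermonde m (j+1) y]
  rw [show (j+1) + m = n from by omega]

/-- For every integer `n ≥ 1`, as an identity in two variables `x, y` over `ℚ`:
`∑_{r=2}^{n+1} x^{r-1} C(n-1,r-2) binom(y,r-1)
 = x ∑_{r=1}^{n} C(n-1,r-1) binom(y+n−r, n) (x−1)^{r-1}`. -/
theorem derivative_two_var_identity (n : ℕ) (hn : 1 ≤ n) (x y : ℚ) :
    ∑ r ∈ Finset.Icc 2 (n + 1),
        x ^ (r - 1) * ((n - 1).choose (r - 2) : ℚ) * binomQ y (r - 1) =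
      x * ∑ r ∈ Finset.Icc 1 n,
            ((n - 1).choose (r - 1) : ℚ) * binomQ (y + (n : ℚ) - (r : ℚ)) n *
              (x - 1) ^ (r - 1) := by
  -- reindex both sums over `range n`
  have hL : ∑ r ∈ Finset.Icc 2 (n + 1),
        x ^ (r - 1) * ((n - 1).choose (r - 2) : ℚ) * binomQ y (r - 1)
      = ∑ k ∈ Finset.range n, x ^ (k+1) * ((n - 1).choose k : ℚ) * binomQ y (k+1) := by
    rw [← Finset.Ico_add_one_right_eq_Icc, Finset.sum_Ico_eq_sum_range]
    rw [show n + 1 + 1 - 2 = n from by omega]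
    apply Finset.sum_congr rfl
    intro k _
    rw [show 2 + k - 1 = k + 1 from by omega, show 2 + k - 2 = k from by omega]
  have hR : ∑ r ∈ Finset.Icc 1 n,
        ((n - 1).choose (r - 1) : ℚ) * binomQ (y + (n : ℚ) - (r : ℚ)) n * (x - 1) ^ (r - 1)
      = ∑ j ∈ Finset.range n,
        ((n - 1).choose j : ℚ) * binomQ (y + ((n - 1 - j : ℕ) : ℚ)) n * (x - 1) ^ j := by
    rw [← Finset.Ico_add_one_right_eq_Icc, Finset.sum_Ico_eq_sum_range]
    rw [show n + 1 - 1 = n from by omega]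
    apply Finset.sum_congr rfl
    intro j hj
    simp only [Finset.mem_range] at hj
    rw [show 1 + j - 1 = j from by omega]
    congr 2
    have : ((n - 1 - j : ℕ) : ℚ) = (n : ℚ) - 1 - j := by
      have h1 : j + 1 ≤ n := by omega
      push_cast [Nat.cast_sub (by omega : 1 ≤ n), Nat.cast_sub (by omega : j ≤ n - 1)]
      ring
    rw [this]
    push_cast
    ring
  rw [hL, hR, Finset.mul_sum]
  -- expand x^(k+1) = x * x^k and x^k in powers of (x-1)
  have hx : ∀ k ∈ Finset.range n, (x : ℚ) ^ k = ∑ j ∈ Finset.range n, (k.choose j : ℚ) * (x-1) ^ j := by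
    intro k hk
    simp only [Finset.mem_range] at hk
    have h0 := add_pow (x - 1) 1 k
    rw [show x - 1 + 1 = x from by ring] at h0
    simp only [one_pow, mul_one] at h0
    rw [h0, Finset.sum_congr rfl
      (fun j _ => mul_comm ((x-1)^j) ((k.choose j : ℚ)))]
    apply Finset.sum_subset
    · exact Finset.range_subset_range.2 (by omega)
    · intro j _ hj'
      simp only [Finset.mem_range, not_lt] at hj'
      rw [Nat.choose_eq_zero_of_lt (by omega)]
      simp
  calc ∑ k ∈ Finset.range n, x ^ (k+1) * ((n - 1).choose k : ℚ) * binomQ y (k+1)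
      = ∑ k ∈ Finset.range n, ∑ j ∈ Finset.range n,
          x * ((k.choose j : ℚ) * (x-1)^j * (((n - 1).choose k : ℚ) * binomQ y (k+1))) := by
        apply Finset.sum_congr rfl
        intro k hk
        rw [← Finset.mul_sum, ← Finset.sum_mul, ← hx k hk]
        ring
    _ = ∑ j ∈ Finset.range n, ∑ k ∈ Finset.range n,
          x * ((k.choose j : ℚ) * (x-1)^j * (((n - 1).choose k : ℚ) * binomQ y (k+1))) :=
        Finset.sum_comm
    _ = ∑ j ∈ Finset.range n,
          x * (((n - 1).choose j : ℚ) * binomQ (y + ((n - 1 - j : ℕ) : ℚ)) n * (x - 1) ^ j) := by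
        apply Finset.sum_congr rfl
        intro j hj
        simp only [Finset.mem_range] at hj
        rw [← Finset.mul_sum]
        congr 1
        have : ∑ k ∈ Finset.range n,
            (k.choose j : ℚ) * (x-1)^j * (((n - 1).choose k : ℚ) * binomQ y (k+1))
            = (x-1)^j * ∑ k ∈ Finset.range n,
                ((n - 1).choose k : ℚ) * (k.choose j : ℚ) * binomQ y (k+1) := by
          rw [Finset.mul_sum]
          apply Finset.sum_congr rfl
          intro k _
          ring
        rw [this, inner_sum_eq n j hn hj y]
        ring
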